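/- For every p ∈ (1/2, 1] there exists a constant c_p such that for all N ∈ ℕ: ∫₀¹ sup_{1≤n≤2^N} ( n |K_n(x)| )^p dx ≤ c_p 2^{N(2p−1)}. -/

import Mathlib

open MeasureTheory Filter
open scoped ENNReal NNReal

noncomputable section

namespace Walsh

/-- Lebesgue measure restricted to `[0,1)`. -/
def μI : Measure ℝ := volume.restrict (Set.Ico (0:ℝ) 1)

/-- The `k`-th binary digit `x_k` of `x ∈ [0,1)`, using the expansion terminating
in `0`'s for dyadic rationals. -/
def digit (k : ℕ) (x : ℝ) : ℕ := (⌊x * 2 ^ (k + 1)⌋).toNat % 2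

/-- `ε_k(n)`, the `k`-th binary coefficient of `n`. -/
def eps (k n : ℕ) : ℕ := if n.testBit k then 1 else 0

/-- Walsh–Paley function `w_n(x) = (-1)^{Σ_k ε_k(n) x_k}`. -/
def walsh (n : ℕ) (x : ℝ) : ℝ :=
  (-1 : ℝ) ^ (∑ k ∈ Finset.range (n + 1), eps k n * digit k x)

/-- Walsh–Dirichlet kernel `D_n = Σ_{k=0}^{n-1} w_k`. -/
def D (n : ℕ) (x : ℝ) : ℝ := ∑ k ∈ Finset.range n, walsh k x

/-- Walsh–Fejér kernel `K_n = (1/n) Σ_{k=1}^{n} D_k`. -/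
def K (n : ℕ) (x : ℝ) : ℝ := (1 / (n : ℝ)) * ∑ k ∈ Finset.Icc 1 n, D k x

/-- Partial sums `S_M(f) = Σ_{i=0}^{M-1} f̂(i) w_i` of the Walsh–Fourier series. -/
def S (f : ℝ → ℝ) (M : ℕ) (x : ℝ) : ℝ :=
  ∑ i ∈ Finset.range M, (∫ t in Set.Ico (0:ℝ) 1, f t * walsh i t) * walsh i x

/-- `Q_n = q_0 + ⋯ + q_{n-1}`. -/
def Q (q : ℕ → ℝ) (n : ℕ) : ℝ := ∑ k ∈ Finset.range n, q k

/-- Walsh–Nörlund mean `t_n(f) = (1/Q_n) Σ_{k=1}^n q_{n-k} S_k(f)`. -/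
def t (q : ℕ → ℝ) (n : ℕ) (f : ℝ → ℝ) (x : ℝ) : ℝ :=
  (1 / Q q n) * ∑ k ∈ Finset.Icc 1 n, q (n - k) * S f k x

/-- Walsh–Nörlund kernel `F_n = (1/Q_n) Σ_{k=1}^n q_{n-k} D_k`. -/
def F (q : ℕ → ℝ) (n : ℕ) (x : ℝ) : ℝ :=
  (1 / Q q n) * ∑ k ∈ Finset.Icc 1 n, q (n - k) * D k x

/-- Maximal Nörlund operator `t^*(f) = sup_{n ≥ 1} |t_n(f)|`, valued in `ℝ≥0∞`. -/
def tstar (q : ℕ → ℝ) (f : ℝ → ℝ) (x : ℝ) : ℝ≥0∞ :=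
  ⨆ n ∈ Set.Ici 1, ENNReal.ofReal |t q n f x|

/-- `L^p[0,1)` quasinorm (`0 < p ≤ 1`) of a real function, valued in `ℝ≥0∞`. -/
def LpNorm (p : ℝ) (g : ℝ → ℝ) : ℝ≥0∞ :=
  (∫⁻ x in Set.Ico (0:ℝ) 1, ENNReal.ofReal |g x| ^ p) ^ (1 / p)

/-- `L^p[0,1)` quasinorm of an `ℝ≥0∞`-valued function. -/
def LpNormE (p : ℝ) (g : ℝ → ℝ≥0∞) : ℝ≥0∞ :=
  (∫⁻ x in Set.Ico (0:ℝ) 1, g x ^ p) ^ (1 / p)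

/-- `L^∞[0,1)` norm. -/
def LinfNorm (g : ℝ → ℝ) : ℝ≥0∞ := essSup (fun x => ENNReal.ofReal |g x|) μI

/-- Dyadic maximal function `E^*(f) = sup_m |S_{2^m}(f)|`, valued in `ℝ≥0∞`. -/
def maxS (f : ℝ → ℝ) (x : ℝ) : ℝ≥0∞ := ⨆ m : ℕ, ENNReal.ofReal |S f (2 ^ m) x|

/-- Dyadic Hardy space quasinorm `‖f‖_{H_p} = ‖sup_m |S_{2^m} f|‖_{L^p}`. -/
def HpNorm (p : ℝ) (f : ℝ → ℝ) : ℝ≥0∞ :=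
  (∫⁻ x in Set.Ico (0:ℝ) 1, maxS f x ^ p) ^ (1 / p)

/-- Dyadic (logical) addition `x ∔ y = Σ_k |x_k - y_k| 2^{-(k+1)}`. -/
def dadd (x y : ℝ) : ℝ :=
  ∑' k : ℕ, |(digit k x : ℝ) - (digit k y : ℝ)| * (2 : ℝ)⁻¹ ^ (k + 1)

/-- The dyadic interval `I_N = [0, 2^{-N})`. -/
def IN (N : ℕ) : Set ℝ := Set.Ico (0:ℝ) (1 / 2 ^ N)

/-- `F_{n,1} = (w_n/Q_n) Σ_{j=1}^r Q_{n^{(j-1)}} w_{2^{n_j}} D_{2^{n_j}}`,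
the first part of the Nörlund kernel decomposition. The sum over the binary
decomposition `n = 2^{n_1} + ⋯ + 2^{n_r}` is re-indexed over the set bit
positions `i` of `n`; if `i = n_j` then `n^{(j-1)} = n mod 2^{i+1}`. -/
def F1 (q : ℕ → ℝ) (n : ℕ) (x : ℝ) : ℝ :=
  (walsh n x / Q q n) *
    ∑ i ∈ Finset.range (n + 1),
      if n.testBit i then Q q (n % 2 ^ (i + 1)) * walsh (2 ^ i) x * D (2 ^ i) x else 0

end Walsh
namespace WalshAux
open Walsh

lemma eps_zero_of_lt {k n : ℕ} (h : n < 2 ^ k) : eps k n = 0 := by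
  simp [eps, Nat.testBit_lt_two_pow h]

lemma walsh_eq_sum (n M : ℕ) (hM : n + 1 ≤ M) (x : ℝ) :
    walsh n x = (-1 : ℝ) ^ (∑ k ∈ Finset.range M, eps k n * digit k x) := by
  unfold walsh
  congr 1
  refine Finset.sum_subset (Finset.range_subset_range.mpr hM) ?_
  intro k _ hk
  have hk' : n + 1 ≤ k := by simpa using hk
  have : n < 2 ^ k :=
    lt_of_lt_of_le n.lt_two_pow_self (Nat.pow_le_pow_right (by norm_num) (by omega))
  simp [eps_zero_of_lt this]

lemma walsh_zero (x : ℝ) : walsh 0 x = 1 := by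
  simp [walsh, eps]

lemma walsh_two_pow (m : ℕ) (x : ℝ) : walsh (2 ^ m) x = (-1 : ℝ) ^ digit m x := by
  unfold walsh
  congr 1
  have h : ∀ k ∈ Finset.range (2 ^ m + 1), eps k (2 ^ m) * digit k x
      = if m = k then digit k x else 0 := by
    intro k _
    by_cases h : m = k
    · subst h; simp [eps, Nat.testBit_two_pow_self]
    · simp [eps, Nat.testBit_two_pow_of_ne h, h]
  rw [Finset.sum_congr rfl h, Finset.sum_ite_eq]
  have hm : m ∈ Finset.range (2 ^ m + 1) := by
    simp [Nat.lt_succ_iff]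
    exact le_of_lt m.lt_two_pow_self
  rw [if_pos hm]

lemma eps_two_pow_add {m i : ℕ} (hi : i < 2 ^ m) (k : ℕ) :
    eps k (2 ^ m + i) = eps k (2 ^ m) + eps k i := by
  unfold eps
  rcases lt_trichotomy k m with h | h | h
  · rw [Nat.testBit_two_pow_add_gt h, Nat.testBit_two_pow_of_ne (by omega)]
    simp
  · subst h
    rw [Nat.testBit_two_pow_add_eq, Nat.testBit_lt_two_pow hi, Nat.testBit_two_pow_self]
    simp [Nat.testBit_lt_two_pow hi]
  · have h1 : 2 ^ m + i < 2 ^ k := by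
      have : 2 ^ (m + 1) ≤ 2 ^ k := Nat.pow_le_pow_right (by norm_num) (by omega)
      have := Nat.pow_succ 2 m ▸ this
      omega
    rw [Nat.testBit_lt_two_pow h1, Nat.testBit_two_pow_of_ne (by omega),
      Nat.testBit_lt_two_pow (by omega : i < 2 ^ k)]
    simp

lemma walsh_two_pow_add {m i : ℕ} (hi : i < 2 ^ m) (x : ℝ) :
    walsh (2 ^ m + i) x = walsh (2 ^ m) x * walsh i x := by
  rw [walsh_eq_sum (2 ^ m + i) (2 ^ m + i + 1) le_rfl x,
    walsh_eq_sum (2 ^ m) (2 ^ m + i + 1) (by omega) x,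
    walsh_eq_sum i (2 ^ m + i + 1) (by omega) x, ← pow_add]
  congr 1
  rw [← Finset.sum_add_distrib]
  refine Finset.sum_congr rfl fun k _ => ?_
  rw [eps_two_pow_add hi k, add_mul]

lemma D_two_pow_add {m i : ℕ} (hi : i ≤ 2 ^ m) (x : ℝ) :
    D (2 ^ m + i) x = D (2 ^ m) x + walsh (2 ^ m) x * D i x := by
  unfold D
  rw [Finset.sum_range_add, Finset.mul_sum]
  congr 1
  refine Finset.sum_congr rfl fun k hk => ?_
  exact walsh_two_pow_add (lt_of_lt_of_le (Finset.mem_range.mp hk) hi) x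

lemma floor_eq_digits {x : ℝ} (hx : x ∈ Set.Ico (0:ℝ) 1) (m : ℕ) :
    ⌊x * 2 ^ m⌋ = ((∑ i ∈ Finset.range m, digit i x * 2 ^ (m - 1 - i) : ℕ) : ℤ) := by
  induction m with
  | zero =>
    simp [Int.floor_eq_zero_iff, hx]
  | succ m ih =>
    set k : ℕ := ∑ i ∈ Finset.range m, digit i x * 2 ^ (m - 1 - i) with hk
    have h1 : (k : ℝ) ≤ x * 2 ^ m := by
      have := Int.floor_le (x * 2 ^ m)
      rw [ih] at this; exact_mod_cast this
    have h2 : x * 2 ^ m < (k : ℝ) + 1 := by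
      have := Int.lt_floor_add_one (x * 2 ^ m)
      rw [ih] at this; exact_mod_cast this
    set l : ℤ := ⌊x * 2 ^ (m + 1)⌋ with hl
    have hxx : x * 2 ^ (m + 1) = (x * 2 ^ m) * 2 := by ring
    have h3 : 2 * (k : ℤ) ≤ l := by
      rw [hl]
      refine Int.le_floor.mpr ?_
      rw [hxx]; push_cast; linarith
    have h4 : l < 2 * (k : ℤ) + 2 := by
      rw [hl]
      refine Int.floor_lt.mpr ?_
      rw [hxx]; push_cast; linarith
    have hd : digit m x = l.toNat % 2 := rfl
    have hsum : (∑ i ∈ Finset.range (m + 1), digit i x * 2 ^ (m + 1 - 1 - i) : ℕ)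
        = 2 * k + digit m x := by
      rw [Finset.sum_range_succ]
      have : ∀ i ∈ Finset.range m, digit i x * 2 ^ (m + 1 - 1 - i)
          = 2 * (digit i x * 2 ^ (m - 1 - i)) := by
        intro i hi
        have hi' : i < m := Finset.mem_range.mp hi
        have : m + 1 - 1 - i = (m - 1 - i) + 1 := by omega
        rw [this, pow_succ]; ring
      rw [Finset.sum_congr rfl this, ← Finset.mul_sum, ← hk]
      simp [Nat.succ_sub_one]
    rw [hsum, hd]
    omega

lemma digit_lt_two (k : ℕ) (x : ℝ) : digit k x < 2 := Nat.mod_lt _ (by norm_num)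

lemma lt_inv_iff {x : ℝ} (hx : x ∈ Set.Ico (0:ℝ) 1) (m : ℕ) :
    x < ((2:ℝ) ^ m)⁻¹ ↔ ∀ i < m, digit i x = 0 := by
  have h2 : (0:ℝ) < 2 ^ m := by positivity
  have hfloor : x < ((2:ℝ) ^ m)⁻¹ ↔ ⌊x * 2 ^ m⌋ = 0 := by
    rw [Int.floor_eq_zero_iff]
    constructor
    · intro h
      refine ⟨mul_nonneg hx.1 (by positivity), ?_⟩
      calc x * 2 ^ m < ((2:ℝ) ^ m)⁻¹ * 2 ^ m := mul_lt_mul_of_pos_right h h2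
        _ = 1 := by field_simp
    · intro h
      have h' := h.2
      calc x = x * 2 ^ m * ((2:ℝ) ^ m)⁻¹ := by field_simp
        _ < 1 * ((2:ℝ) ^ m)⁻¹ := mul_lt_mul_of_pos_right h' (by positivity)
        _ = ((2:ℝ) ^ m)⁻¹ := one_mul _
  rw [hfloor, floor_eq_digits hx m]
  rw [show ((((∑ i ∈ Finset.range m, digit i x * 2 ^ (m - 1 - i) : ℕ)) : ℤ) = 0)
      ↔ (∑ i ∈ Finset.range m, digit i x * 2 ^ (m - 1 - i) = 0) from by exact_mod_cast Iff.rfl]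
  rw [Finset.sum_eq_zero_iff]
  constructor
  · intro h i hi
    have := h i (Finset.mem_range.mpr hi)
    have h2 : (2:ℕ) ^ (m - 1 - i) ≠ 0 := by positivity
    exact mul_eq_zero.mp this |>.resolve_right h2
  · intro h i hi
    rw [h i (Finset.mem_range.mp hi)]; ring

lemma digits_loc {x : ℝ} (hx : x ∈ Set.Ico (0:ℝ) 1) {m j : ℕ} (hj : j < m)
    (h : ∀ i < m, i ≠ j → digit i x = 0) :
    x < ((2:ℝ) ^ m)⁻¹ ∨
      (((2:ℝ) ^ (j + 1))⁻¹ ≤ x ∧ x < ((2:ℝ) ^ (j + 1))⁻¹ + ((2:ℝ) ^ m)⁻¹) := by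
  have hsum : (∑ i ∈ Finset.range m, digit i x * 2 ^ (m - 1 - i) : ℕ)
      = digit j x * 2 ^ (m - 1 - j) := by
    refine Finset.sum_eq_single j (fun i hi hne => ?_) (fun hj' => ?_)
    · rw [h i (Finset.mem_range.mp hi) hne]; ring
    · exact absurd (Finset.mem_range.mpr hj) hj'
  have hd2 := digit_lt_two j x
  rcases (by omega : digit j x = 0 ∨ digit j x = 1) with h0 | h1
  · left
    rw [lt_inv_iff hx m]
    intro i hi
    by_cases hij : i = j
    · subst hij; exact h0
    · exact h i hi hij
  · right
    have hk : ⌊x * 2 ^ m⌋ = ((2 ^ (m - 1 - j) : ℕ) : ℤ) := by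
      rw [floor_eq_digits hx m, hsum, h1, one_mul]
    have hb1 : ((2:ℝ) ^ (m - 1 - j) : ℝ) ≤ x * 2 ^ m := by
      have := Int.floor_le (x * 2 ^ m)
      rw [hk] at this
      exact_mod_cast this
    have hb2 : x * 2 ^ m < (2:ℝ) ^ (m - 1 - j) + 1 := by
      have := Int.lt_floor_add_one (x * 2 ^ m)
      rw [hk] at this
      exact_mod_cast this
    have hexp : (m - 1 - j) + (j + 1) = m := by omega
    have hpow : (2:ℝ) ^ (m - 1 - j) * 2 ^ (j + 1) = 2 ^ m := by
      rw [← pow_add, hexp]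
    have h2m : (0:ℝ) < 2 ^ m := by positivity
    have hinv : ((2:ℝ) ^ (j + 1))⁻¹ = (2:ℝ) ^ (m - 1 - j) / 2 ^ m := by
      rw [eq_div_iff (ne_of_gt h2m), ← hpow]
      field_simp
    constructor
    · rw [hinv, div_le_iff₀ h2m]
      linarith
    · have : x < ((2:ℝ) ^ (m - 1 - j) + 1) / 2 ^ m := by
        rw [lt_div_iff₀ h2m]; linarith
      have h1m : ((2:ℝ) ^ (m - 1 - j) + 1) / 2 ^ m = ((2:ℝ) ^ (j + 1))⁻¹ + ((2:ℝ) ^ m)⁻¹ := by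
        rw [hinv]; field_simp
      linarith [h1m ▸ this]

/-- indicator-type weight: all digits below `m` vanish except possibly the `j`-th. -/
noncomputable def e (m j : ℕ) (x : ℝ) : ℝ :=
  @ite _ (∀ i < m, i ≠ j → digit i x = 0) (Classical.propDecidable _) 1 0

lemma e_nonneg (m j : ℕ) (x : ℝ) : 0 ≤ e m j x := by
  unfold e; split <;> norm_num

lemma e_le_one (m j : ℕ) (x : ℝ) : e m j x ≤ 1 := by
  unfold e; split <;> norm_num

lemma e_eq_one {m j : ℕ} {x : ℝ} (h : ∀ i < m, i ≠ j → digit i x = 0) : e m j x = 1 := by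
  unfold e; rw [if_pos h]

lemma e_succ_self (m : ℕ) (x : ℝ) : e (m + 1) m x = e m m x := by
  unfold e
  congr 1
  apply propext
  constructor
  · intro h i hi hne; exact h i (by omega) hne
  · intro h i hi hne
    rcases Nat.lt_succ_iff_lt_or_eq.mp hi with h' | h'
    · exact h i h' hne
    · exact absurd h' hne

lemma e_succ_of_digit_zero {m j : ℕ} {x : ℝ} (hd : digit m x = 0) (hj : j ≤ m) :
    e (m + 1) j x = e m j x := by
  unfold e
  congr 1
  apply propext
  constructor
  · intro h i hi hne; exact h i (by omega) hne
  · intro h i hi hne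
    rcases Nat.lt_succ_iff_lt_or_eq.mp hi with h' | h'
    · exact h i h' hne
    · subst h'; exact hd

lemma e_succ_succ_of_digit_zero {m : ℕ} {x : ℝ} (hd : digit m x = 0) :
    e (m + 1) (m + 1) x = e m m x := by
  unfold e
  congr 1
  apply propext
  constructor
  · intro h i hi hne; exact h i (by omega) (by omega)
  · intro h i hi _
    rcases Nat.lt_succ_iff_lt_or_eq.mp hi with h' | h'
    · exact h i h' (by omega)
    · subst h'; exact hd

/-- the Dirichlet kernel at `2^m` as a digit indicator. -/
lemma D_two_pow_eq {x : ℝ} (hx : x ∈ Set.Ico (0:ℝ) 1) (m : ℕ) :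
    D (2 ^ m) x = 2 ^ m * e m m x := by
  induction m with
  | zero =>
    simp only [pow_zero]
    have : D 1 x = walsh 0 x := by
      unfold D; simp
    rw [this, walsh_zero, e_eq_one (by omega)]
    norm_num
  | succ m ih =>
    have hrec : D (2 ^ (m + 1)) x = D (2 ^ m) x * (1 + walsh (2 ^ m) x) := by
      have h21 : 2 ^ (m + 1) = 2 ^ m + 2 ^ m := by ring
      rw [h21, D_two_pow_add le_rfl x]; ring
    rw [hrec, ih, walsh_two_pow]
    rcases (by have := digit_lt_two m x; omega : digit m x = 0 ∨ digit m x = 1) with h0 | h1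
    · rw [h0, e_succ_succ_of_digit_zero h0]
      have h' : ((-1:ℝ)) ^ (0:ℕ) = 1 := pow_zero _
      rw [h', pow_succ]; ring
    · have he : e (m + 1) (m + 1) x = 0 := by
        unfold e
        rw [if_neg]
        intro h
        have := h m (by omega) (by omega)
        omega
      rw [h1, he]
      have h' : ((-1:ℝ)) ^ (1:ℕ) = -1 := pow_one _
      rw [h']; ring
/-- `Aa n x = n K_n(x) = Σ_{k=1}^n D_k(x)`. -/
noncomputable def Aa (n : ℕ) (x : ℝ) : ℝ := ∑ k ∈ Finset.Icc 1 n, D k x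

lemma Aa_eq_range (n : ℕ) (x : ℝ) : Aa n x = ∑ k ∈ Finset.range n, D (k + 1) x := by
  induction n with
  | zero => simp [Aa]
  | succ n ih =>
    rw [Aa, Finset.sum_Icc_succ_top (by omega), ← Aa, ih, Finset.sum_range_succ]

lemma Aa_one (x : ℝ) : Aa 1 x = 1 := by
  rw [Aa_eq_range]
  simp only [Finset.sum_range_one]
  unfold D
  simp [walsh_zero]

lemma Aa_two_pow_add {m i : ℕ} (hi : i ≤ 2 ^ m) (x : ℝ) :
    Aa (2 ^ m + i) x = Aa (2 ^ m) x + (i : ℝ) * D (2 ^ m) x + walsh (2 ^ m) x * Aa i x := by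
  rw [Aa_eq_range, Aa_eq_range, Aa_eq_range, Finset.sum_range_add]
  have h : ∀ k ∈ Finset.range i, D (2 ^ m + k + 1) x
      = D (2 ^ m) x + walsh (2 ^ m) x * D (k + 1) x := by
    intro k hk
    have hk' : k + 1 ≤ 2 ^ m := le_trans (Finset.mem_range.mp hk) hi
    rw [show 2 ^ m + k + 1 = 2 ^ m + (k + 1) by ring, D_two_pow_add hk' x]
  rw [Finset.sum_congr rfl h, Finset.sum_add_distrib, Finset.sum_const, Finset.card_range,
    ← Finset.mul_sum]
  push_cast
  ring

/-- key inductive bound for the dyadic Fejér sums. -/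
lemma Aa_two_pow_le {x : ℝ} (hx : x ∈ Set.Ico (0:ℝ) 1) (m : ℕ) :
    |Aa (2 ^ m) x| ≤ ∑ j ∈ Finset.range m, (2:ℝ) ^ (m - 1 + j) * e m j x
      + 2 ^ m * e m m x := by
  induction m with
  | zero =>
    simp only [pow_zero, Finset.range_zero, Finset.sum_empty, zero_add, one_mul]
    rw [Aa_one, e_eq_one (by omega)]
    norm_num
  | succ m ih =>
    have hrec : Aa (2 ^ (m + 1)) x
        = (1 + walsh (2 ^ m) x) * Aa (2 ^ m) x + (2 ^ m : ℝ) * D (2 ^ m) x := by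
      have h21 : 2 ^ (m + 1) = 2 ^ m + 2 ^ m := by ring
      rw [h21, Aa_two_pow_add le_rfl x]
      push_cast
      ring
    have hD : (2 ^ m : ℝ) * D (2 ^ m) x = 2 ^ (2 * m) * e m m x := by
      rw [D_two_pow_eq hx m, ← mul_assoc, ← pow_add, two_mul]
    rcases (by have := digit_lt_two m x; omega : digit m x = 0 ∨ digit m x = 1) with h0 | h1
    · -- digit m x = 0 : walsh (2^m) x = 1
      have hw : walsh (2 ^ m) x = 1 := by rw [walsh_two_pow, h0, pow_zero]
      have hstep : |Aa (2 ^ (m + 1)) x| ≤ 2 * |Aa (2 ^ m) x| + 2 ^ (2 * m) * e m m x := by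
        rw [hrec, hw, hD]
        calc |(1 + 1) * Aa (2 ^ m) x + 2 ^ (2 * m) * e m m x|
            ≤ |(1 + 1) * Aa (2 ^ m) x| + |2 ^ (2 * m) * e m m x| := abs_add_le _ _
          _ = 2 * |Aa (2 ^ m) x| + 2 ^ (2 * m) * e m m x := by
              rw [abs_mul, abs_mul]
              rw [abs_of_nonneg (by norm_num : (0:ℝ) ≤ 1 + 1),
                abs_of_nonneg (by positivity : (0:ℝ) ≤ (2:ℝ) ^ (2 * m)),
                abs_of_nonneg (e_nonneg m m x)]
              norm_num
      refine le_trans hstep ?_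
      have h2ih : 2 * |Aa (2 ^ m) x|
          ≤ 2 * (∑ j ∈ Finset.range m, (2:ℝ) ^ (m - 1 + j) * e m j x + 2 ^ m * e m m x) :=
        by linarith [ih]
      -- rewrite target sum
      have htarget : ∑ j ∈ Finset.range (m + 1), (2:ℝ) ^ (m + 1 - 1 + j) * e (m + 1) j x
            + 2 ^ (m + 1) * e (m + 1) (m + 1) x
          = ∑ j ∈ Finset.range m, 2 * ((2:ℝ) ^ (m - 1 + j) * e m j x)
            + 2 ^ (2 * m) * e m m x + 2 * (2 ^ m * e m m x) := by
        rw [Finset.sum_range_succ]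
        have hj : ∀ j ∈ Finset.range m, (2:ℝ) ^ (m + 1 - 1 + j) * e (m + 1) j x
            = 2 * ((2:ℝ) ^ (m - 1 + j) * e m j x) := by
          intro j hj
          have hjm : j < m := Finset.mem_range.mp hj
          rw [e_succ_of_digit_zero h0 (by omega),
            show m + 1 - 1 + j = (m - 1 + j) + 1 by omega, pow_succ]
          ring
        rw [Finset.sum_congr rfl hj]
        rw [show m + 1 - 1 + m = 2 * m by omega, e_succ_self,
          e_succ_succ_of_digit_zero h0, pow_succ]
        ring
      rw [htarget]
      rw [mul_add, Finset.mul_sum] at h2ih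
      linarith
    · -- digit m x = 1 : walsh (2^m) x = -1, Aa (2^(m+1)) = 2^m D(2^m)
      have hw : walsh (2 ^ m) x = -1 := by rw [walsh_two_pow, h1, pow_one]
      have hval : Aa (2 ^ (m + 1)) x = 2 ^ (2 * m) * e m m x := by
        rw [hrec, hw, ← hD]; ring
      rw [hval, abs_of_nonneg (mul_nonneg (by positivity) (e_nonneg _ _ _))]
      have hterm : (2:ℝ) ^ (2 * m) * e m m x
          = (2:ℝ) ^ (m + 1 - 1 + m) * e (m + 1) m x := by
        rw [e_succ_self, show m + 1 - 1 + m = 2 * m by omega]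
      rw [hterm]
      have hmem : m ∈ Finset.range (m + 1) := Finset.self_mem_range_succ m
      have hsingle : (2:ℝ) ^ (m + 1 - 1 + m) * e (m + 1) m x
          ≤ ∑ j ∈ Finset.range (m + 1), (2:ℝ) ^ (m + 1 - 1 + j) * e (m + 1) j x := by
        refine Finset.single_le_sum (f := fun j => (2:ℝ) ^ (m + 1 - 1 + j) * e (m + 1) j x)
          (fun j _ => ?_) hmem
        exact mul_nonneg (by positivity) (e_nonneg _ _ _)
      have hlast : (0:ℝ) ≤ 2 ^ (m + 1) * e (m + 1) (m + 1) x :=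
        mul_nonneg (by positivity) (e_nonneg _ _ _)
      linarith

/-- bound for the full maximal function by dyadic pieces. -/
lemma Aa_le_B {x : ℝ} (N : ℕ) :
    ∀ n ≤ 2 ^ N, |Aa n x|
      ≤ 1 + ∑ m ∈ Finset.range N, ((2:ℝ) ^ m * |D (2 ^ m) x| + |Aa (2 ^ m) x|) := by
  induction N with
  | zero =>
    intro n hn
    interval_cases n
    · simp [Aa]
    · rw [Aa_one]; norm_num
  | succ N ih =>
    intro n hn
    have hterm : (0:ℝ) ≤ (2:ℝ) ^ N * |D (2 ^ N) x| + |Aa (2 ^ N) x| := by positivity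
    by_cases h : n ≤ 2 ^ N
    · refine le_trans (ih n h) ?_
      rw [Finset.sum_range_succ]
      linarith
    · push_neg at h
      set i : ℕ := n - 2 ^ N with hi
      have hin : n = 2 ^ N + i := by omega
      have hi2 : i ≤ 2 ^ N := by
        have : n ≤ 2 ^ (N + 1) := hn
        have h2 : (2:ℕ) ^ (N + 1) = 2 ^ N + 2 ^ N := by ring
        omega
      have hrec := Aa_two_pow_add (m := N) hi2 x
      rw [← hin] at hrec
      have habs : |Aa n x| ≤ |Aa (2 ^ N) x| + (2:ℝ) ^ N * |D (2 ^ N) x| + |Aa i x| := by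
        rw [hrec]
        refine le_trans (abs_add_le _ _) ?_
        have h1 : |Aa (2 ^ N) x + (i : ℝ) * D (2 ^ N) x|
            ≤ |Aa (2 ^ N) x| + (2:ℝ) ^ N * |D (2 ^ N) x| := by
          refine le_trans (abs_add_le _ _) ?_
          have : |(i : ℝ) * D (2 ^ N) x| ≤ (2:ℝ) ^ N * |D (2 ^ N) x| := by
            rw [abs_mul]
            refine mul_le_mul_of_nonneg_right ?_ (abs_nonneg _)
            rw [abs_of_nonneg (by positivity)]
            exact_mod_cast hi2
          linarith
        have h2 : |walsh (2 ^ N) x * Aa i x| = |Aa i x| := by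
          rw [abs_mul, walsh_two_pow, abs_pow, abs_neg, abs_one, one_pow, one_mul]
        rw [h2]
        linarith
      have hIH := ih i hi2
      rw [Finset.sum_range_succ]
      linarith

/-- interval indicator. -/
noncomputable def ind (a b : ℝ) (x : ℝ) : ℝ := (Set.Ico a b).indicator (fun _ => 1) x

lemma ind_nonneg (a b x : ℝ) : 0 ≤ ind a b x := by
  unfold ind
  exact Set.indicator_nonneg (fun _ _ => zero_le_one) x

lemma ind_of_mem {a b x : ℝ} (h : x ∈ Set.Ico a b) : ind a b x = 1 :=
  Set.indicator_of_mem h _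

lemma e_le_ind {x : ℝ} (hx : x ∈ Set.Ico (0:ℝ) 1) {m j : ℕ} (hj : j < m) :
    e m j x ≤ ind 0 ((2:ℝ) ^ m)⁻¹ x
      + ind ((2:ℝ) ^ (j + 1))⁻¹ (((2:ℝ) ^ (j + 1))⁻¹ + ((2:ℝ) ^ m)⁻¹) x := by
  unfold e
  split
  · rename_i h
    rcases digits_loc hx hj h with h' | h'
    · have h1 : ind 0 ((2:ℝ) ^ m)⁻¹ x = 1 := ind_of_mem ⟨hx.1, h'⟩
      rw [h1]
      linarith [ind_nonneg (((2:ℝ) ^ (j + 1))⁻¹) (((2:ℝ) ^ (j + 1))⁻¹ + ((2:ℝ) ^ m)⁻¹) x]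
    · have h1 : ind ((2:ℝ) ^ (j + 1))⁻¹ (((2:ℝ) ^ (j + 1))⁻¹ + ((2:ℝ) ^ m)⁻¹) x = 1 :=
        ind_of_mem ⟨h'.1, h'.2⟩
      rw [h1]
      linarith [ind_nonneg 0 (((2:ℝ) ^ m)⁻¹) x]
  · exact add_nonneg (ind_nonneg _ _ _) (ind_nonneg _ _ _)

lemma e_self_le_ind {x : ℝ} (hx : x ∈ Set.Ico (0:ℝ) 1) (m : ℕ) :
    e m m x ≤ ind 0 ((2:ℝ) ^ m)⁻¹ x := by
  unfold e
  split
  · rename_i h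
    have h' : x < ((2:ℝ) ^ m)⁻¹ := (lt_inv_iff hx m).mpr (fun i hi => h i hi (by omega))
    rw [ind_of_mem ⟨hx.1, h'⟩]
  · exact ind_nonneg _ _ _

/-- the explicit indicator majorant. -/
noncomputable def V (N : ℕ) (x : ℝ) : ℝ :=
  1 + ∑ m ∈ Finset.range N,
    ((2:ℝ) ^ (2 * m) * ind 0 ((2:ℝ) ^ m)⁻¹ x
      + ((∑ j ∈ Finset.range m, (2:ℝ) ^ (m - 1 + j) *
            (ind 0 ((2:ℝ) ^ m)⁻¹ x
              + ind ((2:ℝ) ^ (j + 1))⁻¹ (((2:ℝ) ^ (j + 1))⁻¹ + ((2:ℝ) ^ m)⁻¹) x))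
          + (2:ℝ) ^ m * ind 0 ((2:ℝ) ^ m)⁻¹ x))

lemma V_nonneg (N : ℕ) (x : ℝ) : 0 ≤ V N x := by
  unfold V
  have h : ∀ m ∈ Finset.range N, (0:ℝ) ≤
      (2:ℝ) ^ (2 * m) * ind 0 ((2:ℝ) ^ m)⁻¹ x
      + ((∑ j ∈ Finset.range m, (2:ℝ) ^ (m - 1 + j) *
            (ind 0 ((2:ℝ) ^ m)⁻¹ x
              + ind ((2:ℝ) ^ (j + 1))⁻¹ (((2:ℝ) ^ (j + 1))⁻¹ + ((2:ℝ) ^ m)⁻¹) x))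
          + (2:ℝ) ^ m * ind 0 ((2:ℝ) ^ m)⁻¹ x) := by
    intro m _
    have hs : (0:ℝ) ≤ ∑ j ∈ Finset.range m, (2:ℝ) ^ (m - 1 + j) *
        (ind 0 ((2:ℝ) ^ m)⁻¹ x
          + ind ((2:ℝ) ^ (j + 1))⁻¹ (((2:ℝ) ^ (j + 1))⁻¹ + ((2:ℝ) ^ m)⁻¹) x) := by
      refine Finset.sum_nonneg fun j _ => ?_
      have := ind_nonneg 0 (((2:ℝ) ^ m)⁻¹) x
      have := ind_nonneg (((2:ℝ) ^ (j + 1))⁻¹) (((2:ℝ) ^ (j + 1))⁻¹ + ((2:ℝ) ^ m)⁻¹) x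
      positivity
    have h1 := ind_nonneg 0 (((2:ℝ) ^ m)⁻¹) x
    positivity
  have := Finset.sum_nonneg h
  linarith

/-- the maximal partial-sum bound converted to indicators. -/
lemma Aa_le_V {x : ℝ} (hx : x ∈ Set.Ico (0:ℝ) 1) (N : ℕ) :
    ∀ n ≤ 2 ^ N, |Aa n x| ≤ V N x := by
  intro n hn
  refine le_trans (Aa_le_B N n hn) ?_
  unfold V
  refine add_le_add le_rfl (Finset.sum_le_sum fun m _ => ?_)
  have hD : (2:ℝ) ^ m * |D (2 ^ m) x| ≤ (2:ℝ) ^ (2 * m) * ind 0 ((2:ℝ) ^ m)⁻¹ x := by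
    rw [D_two_pow_eq hx m, abs_of_nonneg (mul_nonneg (by positivity) (e_nonneg m m x)),
      ← mul_assoc, ← pow_add]
    rw [show m + m = 2 * m by ring]
    exact mul_le_mul_of_nonneg_left (e_self_le_ind hx m) (by positivity)
  have hA : |Aa (2 ^ m) x|
      ≤ (∑ j ∈ Finset.range m, (2:ℝ) ^ (m - 1 + j) *
            (ind 0 ((2:ℝ) ^ m)⁻¹ x
              + ind ((2:ℝ) ^ (j + 1))⁻¹ (((2:ℝ) ^ (j + 1))⁻¹ + ((2:ℝ) ^ m)⁻¹) x))
          + (2:ℝ) ^ m * ind 0 ((2:ℝ) ^ m)⁻¹ x := by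
    refine le_trans (Aa_two_pow_le hx m) (add_le_add ?_ ?_)
    · refine Finset.sum_le_sum fun j hj => ?_
      exact mul_le_mul_of_nonneg_left (e_le_ind hx (Finset.mem_range.mp hj)) (by positivity)
    · exact mul_le_mul_of_nonneg_left (e_self_le_ind hx m) (by positivity)
  linarith

/-- the supremum is bounded by `V`. -/
lemma sup_le_V {x : ℝ} (hx : x ∈ Set.Ico (0:ℝ) 1) (N : ℕ) :
    (⨆ n ∈ Set.Icc (1:ℕ) (2 ^ N), ((n : ℝ) * |Walsh.K n x|)) ≤ V N x := by
  refine Real.iSup_le (fun n => ?_) (V_nonneg N x)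
  refine Real.iSup_le (fun hn => ?_) (V_nonneg N x)
  have h1 : (1:ℕ) ≤ n := hn.1
  have hK : (n : ℝ) * |Walsh.K n x| = |Aa n x| := by
    unfold Walsh.K Aa
    rw [abs_mul, abs_of_nonneg (by positivity : (0:ℝ) ≤ 1 / (n:ℝ)), ← mul_assoc]
    have hn0 : (n:ℝ) ≠ 0 := by positivity
    field_simp
  rw [hK]
  exact Aa_le_V hx N n hn.2

lemma sup_nonneg' (N : ℕ) (x : ℝ) :
    0 ≤ ⨆ n ∈ Set.Icc (1:ℕ) (2 ^ N), ((n : ℝ) * |Walsh.K n x|) := by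
  refine Real.iSup_nonneg fun n => Real.iSup_nonneg fun _ => by positivity

variable {p : ℝ}

lemma rpow_add_le (hp0 : 0 < p) (hp1 : p ≤ 1) {a b : ℝ} (ha : 0 ≤ a) (hb : 0 ≤ b) :
    (a + b) ^ p ≤ a ^ p + b ^ p := by
  have h := NNReal.rpow_add_le_add_rpow a.toNNReal b.toNNReal hp0.le hp1
  have hab : ((a.toNNReal + b.toNNReal : ℝ≥0) : ℝ) = a + b := by
    push_cast
    rw [Real.coe_toNNReal a ha, Real.coe_toNNReal b hb]
  have h2 : ((a.toNNReal + b.toNNReal : ℝ≥0) ^ p : ℝ≥0) = ((a + b).toNNReal) ^ p := by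
    congr 1
    rw [Real.toNNReal_add ha hb]
  calc (a + b) ^ p = (((a + b).toNNReal : ℝ)) ^ p := by
        rw [Real.coe_toNNReal _ (by linarith)]
    _ = (((a + b).toNNReal ^ p : ℝ≥0) : ℝ) := by
        rw [NNReal.coe_rpow]
    _ ≤ ((a.toNNReal ^ p + b.toNNReal ^ p : ℝ≥0) : ℝ) := by
        rw [← h2]; exact_mod_cast h
    _ = a ^ p + b ^ p := by
        push_cast [NNReal.coe_rpow]
        rw [Real.coe_toNNReal a ha, Real.coe_toNNReal b hb]

lemma rpow_sum_le (hp0 : 0 < p) (hp1 : p ≤ 1) {ι : Type*} (s : Finset ι) (f : ι → ℝ)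
    (hf : ∀ i ∈ s, 0 ≤ f i) :
    (∑ i ∈ s, f i) ^ p ≤ ∑ i ∈ s, (f i) ^ p := by
  induction s using Finset.cons_induction with
  | empty => simp [Real.zero_rpow (ne_of_gt hp0)]
  | cons a s ha ih =>
    rw [Finset.sum_cons, Finset.sum_cons]
    have h1 : 0 ≤ f a := hf a (Finset.mem_cons_self a s)
    have h2 : ∀ i ∈ s, 0 ≤ f i := fun i hi => hf i (Finset.mem_cons_of_mem hi)
    have h3 : 0 ≤ ∑ i ∈ s, f i := Finset.sum_nonneg h2
    calc (f a + ∑ i ∈ s, f i) ^ p ≤ (f a) ^ p + (∑ i ∈ s, f i) ^ p :=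
          rpow_add_le hp0 hp1 h1 h3
      _ ≤ (f a) ^ p + ∑ i ∈ s, (f i) ^ p := by linarith [ih h2]

lemma rpow_mul_ind (hp0 : 0 < p) {c a b x : ℝ} (hc : 0 ≤ c) :
    (c * ind a b x) ^ p = c ^ p * ind a b x := by
  by_cases h : x ∈ Set.Ico a b
  · simp [ind, Set.indicator_of_mem h]
  · simp [ind, Set.indicator_of_notMem h, Real.zero_rpow (ne_of_gt hp0)]

/-- powered majorant. -/
noncomputable def U (p : ℝ) (N : ℕ) (x : ℝ) : ℝ :=
  1 + ∑ m ∈ Finset.range N,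
    (((2:ℝ) ^ (2 * m)) ^ p * ind 0 ((2:ℝ) ^ m)⁻¹ x
      + ((∑ j ∈ Finset.range m, ((2:ℝ) ^ (m - 1 + j)) ^ p *
            (ind 0 ((2:ℝ) ^ m)⁻¹ x
              + ind ((2:ℝ) ^ (j + 1))⁻¹ (((2:ℝ) ^ (j + 1))⁻¹ + ((2:ℝ) ^ m)⁻¹) x))
          + ((2:ℝ) ^ m) ^ p * ind 0 ((2:ℝ) ^ m)⁻¹ x))

lemma V_rpow_le_U (hp0 : 0 < p) (hp1 : p ≤ 1) (N : ℕ) (x : ℝ) :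
    (V N x) ^ p ≤ U p N x := by
  unfold V U
  -- name the atoms
  set i0 : ℕ → ℝ := fun m => ind 0 ((2:ℝ) ^ m)⁻¹ x with hi0
  set i1 : ℕ → ℕ → ℝ := fun m j =>
    ind ((2:ℝ) ^ (j + 1))⁻¹ (((2:ℝ) ^ (j + 1))⁻¹ + ((2:ℝ) ^ m)⁻¹) x with hi1
  have hi0n : ∀ m, 0 ≤ i0 m := fun m => ind_nonneg _ _ _
  have hi1n : ∀ m j, 0 ≤ i1 m j := fun m j => ind_nonneg _ _ _
  have hterm : ∀ m : ℕ, (0:ℝ) ≤ (2:ℝ) ^ (2 * m) * i0 m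
      + ((∑ j ∈ Finset.range m, (2:ℝ) ^ (m - 1 + j) * (i0 m + i1 m j))
        + (2:ℝ) ^ m * i0 m) := by
    intro m
    have hs : (0:ℝ) ≤ ∑ j ∈ Finset.range m, (2:ℝ) ^ (m - 1 + j) * (i0 m + i1 m j) :=
      Finset.sum_nonneg fun j _ =>
        mul_nonneg (by positivity) (add_nonneg (hi0n m) (hi1n m j))
    have := hi0n m
    positivity
  have hsum : (0:ℝ) ≤ ∑ m ∈ Finset.range N, ((2:ℝ) ^ (2 * m) * i0 m
      + ((∑ j ∈ Finset.range m, (2:ℝ) ^ (m - 1 + j) * (i0 m + i1 m j))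
        + (2:ℝ) ^ m * i0 m)) := Finset.sum_nonneg fun m _ => hterm m
  calc (1 + ∑ m ∈ Finset.range N, ((2:ℝ) ^ (2 * m) * i0 m
      + ((∑ j ∈ Finset.range m, (2:ℝ) ^ (m - 1 + j) * (i0 m + i1 m j))
        + (2:ℝ) ^ m * i0 m))) ^ p
      ≤ 1 ^ p + (∑ m ∈ Finset.range N, ((2:ℝ) ^ (2 * m) * i0 m
      + ((∑ j ∈ Finset.range m, (2:ℝ) ^ (m - 1 + j) * (i0 m + i1 m j))
        + (2:ℝ) ^ m * i0 m))) ^ p := rpow_add_le hp0 hp1 zero_le_one hsum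
    _ ≤ 1 + ∑ m ∈ Finset.range N, ((2:ℝ) ^ (2 * m) * i0 m
      + ((∑ j ∈ Finset.range m, (2:ℝ) ^ (m - 1 + j) * (i0 m + i1 m j))
        + (2:ℝ) ^ m * i0 m)) ^ p := by
        rw [Real.one_rpow]
        exact add_le_add le_rfl (rpow_sum_le hp0 hp1 _ _ fun m _ => hterm m)
    _ ≤ 1 + ∑ m ∈ Finset.range N, (((2:ℝ) ^ (2 * m)) ^ p * i0 m
      + ((∑ j ∈ Finset.range m, ((2:ℝ) ^ (m - 1 + j)) ^ p * (i0 m + i1 m j))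
        + ((2:ℝ) ^ m) ^ p * i0 m)) := by
        refine add_le_add le_rfl (Finset.sum_le_sum fun m _ => ?_)
        have hs : (0:ℝ) ≤ ∑ j ∈ Finset.range m, (2:ℝ) ^ (m - 1 + j) * (i0 m + i1 m j) :=
          Finset.sum_nonneg fun j _ =>
            mul_nonneg (by positivity) (add_nonneg (hi0n m) (hi1n m j))
        have h1 : (0:ℝ) ≤ (2:ℝ) ^ (2 * m) * i0 m := mul_nonneg (by positivity) (hi0n m)
        have h2 : (0:ℝ) ≤ (2:ℝ) ^ m * i0 m := mul_nonneg (by positivity) (hi0n m)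
        calc ((2:ℝ) ^ (2 * m) * i0 m
            + ((∑ j ∈ Finset.range m, (2:ℝ) ^ (m - 1 + j) * (i0 m + i1 m j))
              + (2:ℝ) ^ m * i0 m)) ^ p
            ≤ ((2:ℝ) ^ (2 * m) * i0 m) ^ p
              + ((∑ j ∈ Finset.range m, (2:ℝ) ^ (m - 1 + j) * (i0 m + i1 m j))
                + (2:ℝ) ^ m * i0 m) ^ p :=
              rpow_add_le hp0 hp1 h1 (add_nonneg hs h2)
          _ ≤ ((2:ℝ) ^ (2 * m) * i0 m) ^ p
              + ((∑ j ∈ Finset.range m, (2:ℝ) ^ (m - 1 + j) * (i0 m + i1 m j)) ^ p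
                + ((2:ℝ) ^ m * i0 m) ^ p) := by
              linarith [rpow_add_le hp0 hp1 hs h2]
          _ ≤ ((2:ℝ) ^ (2 * m)) ^ p * i0 m
              + ((∑ j ∈ Finset.range m, ((2:ℝ) ^ (m - 1 + j)) ^ p * (i0 m + i1 m j))
                + ((2:ℝ) ^ m) ^ p * i0 m) := by
              rw [rpow_mul_ind hp0 (by positivity : (0:ℝ) ≤ (2:ℝ) ^ (2 * m)),
                rpow_mul_ind hp0 (by positivity : (0:ℝ) ≤ (2:ℝ) ^ m)]
              have hj : (∑ j ∈ Finset.range m, (2:ℝ) ^ (m - 1 + j) * (i0 m + i1 m j)) ^ p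
                  ≤ ∑ j ∈ Finset.range m, ((2:ℝ) ^ (m - 1 + j)) ^ p * (i0 m + i1 m j) := by
                refine le_trans (rpow_sum_le hp0 hp1 _ _ fun j _ =>
                  mul_nonneg (by positivity) (add_nonneg (hi0n m) (hi1n m j))) ?_
                refine Finset.sum_le_sum fun j _ => ?_
                rw [mul_add, mul_add]
                calc ((2:ℝ) ^ (m - 1 + j) * i0 m + (2:ℝ) ^ (m - 1 + j) * i1 m j) ^ p
                    ≤ ((2:ℝ) ^ (m - 1 + j) * i0 m) ^ p
                      + ((2:ℝ) ^ (m - 1 + j) * i1 m j) ^ p :=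
                      rpow_add_le hp0 hp1 (mul_nonneg (by positivity) (hi0n m))
                        (mul_nonneg (by positivity) (hi1n m j))
                  _ = ((2:ℝ) ^ (m - 1 + j)) ^ p * i0 m
                      + ((2:ℝ) ^ (m - 1 + j)) ^ p * i1 m j := by
                      rw [rpow_mul_ind hp0 (by positivity : (0:ℝ) ≤ (2:ℝ) ^ (m - 1 + j)),
                        rpow_mul_ind hp0 (by positivity : (0:ℝ) ≤ (2:ℝ) ^ (m - 1 + j))]
              linarith

section
variable (p : ℝ) (N : ℕ)

local notation "μ01" => volume.restrict (Set.Ico (0:ℝ) 1)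

instance : IsFiniteMeasure μ01 := by
  constructor
  rw [Measure.restrict_apply_univ, Real.volume_Ico]
  exact ENNReal.ofReal_lt_top

lemma ind_integrable (a b : ℝ) : Integrable (ind a b) μ01 := by
  have : Integrable (fun _ : ℝ => (1:ℝ)) μ01 := integrable_const 1
  exact this.indicator measurableSet_Ico

lemma ind_integral_nonneg (a b : ℝ) : 0 ≤ ∫ x, ind a b x ∂μ01 :=
  integral_nonneg fun x => ind_nonneg a b x

lemma ind_integral_le {a b : ℝ} (hab : a ≤ b) : ∫ x, ind a b x ∂μ01 ≤ b - a := by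
  have h1 : ∫ x, ind a b x ∂μ01 = ∫ x in Set.Ico a b, (1:ℝ) ∂μ01 := by
    simp only [ind]
    exact integral_indicator measurableSet_Ico
  rw [h1, setIntegral_const, smul_eq_mul, mul_one, measureReal_def,
    Measure.restrict_apply measurableSet_Ico]
  calc (volume (Set.Ico a b ∩ Set.Ico (0:ℝ) 1)).toReal
      ≤ (volume (Set.Ico a b)).toReal := by
        refine ENNReal.toReal_mono ?_ (measure_mono Set.inter_subset_left)
        rw [Real.volume_Ico]
        exact ENNReal.ofReal_ne_top
    _ = b - a := by rw [Real.volume_Ico, ENNReal.toReal_ofReal (by linarith)]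

lemma mterm_integrable (m : ℕ) : Integrable (fun x =>
    ((2:ℝ) ^ (2 * m)) ^ p * ind 0 ((2:ℝ) ^ m)⁻¹ x
      + ((∑ j ∈ Finset.range m, ((2:ℝ) ^ (m - 1 + j)) ^ p *
            (ind 0 ((2:ℝ) ^ m)⁻¹ x
              + ind ((2:ℝ) ^ (j + 1))⁻¹ (((2:ℝ) ^ (j + 1))⁻¹ + ((2:ℝ) ^ m)⁻¹) x))
          + ((2:ℝ) ^ m) ^ p * ind 0 ((2:ℝ) ^ m)⁻¹ x)) μ01 := by
  refine Integrable.add (Integrable.const_mul (ind_integrable _ _) _) (Integrable.add ?_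
    (Integrable.const_mul (ind_integrable _ _) _))
  refine integrable_finset_sum _ fun j _ => Integrable.const_mul ?_ _
  exact Integrable.add (ind_integrable _ _) (ind_integrable _ _)

lemma U_integrable : Integrable (U p N) μ01 := by
  unfold U
  exact Integrable.add (integrable_const 1)
    (integrable_finset_sum _ fun m _ => mterm_integrable p m)

lemma mterm_integral_le (hp : 0 ≤ p) (m : ℕ) :
    ∫ x, (((2:ℝ) ^ (2 * m)) ^ p * ind 0 ((2:ℝ) ^ m)⁻¹ x
      + ((∑ j ∈ Finset.range m, ((2:ℝ) ^ (m - 1 + j)) ^ p *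
            (ind 0 ((2:ℝ) ^ m)⁻¹ x
              + ind ((2:ℝ) ^ (j + 1))⁻¹ (((2:ℝ) ^ (j + 1))⁻¹ + ((2:ℝ) ^ m)⁻¹) x))
          + ((2:ℝ) ^ m) ^ p * ind 0 ((2:ℝ) ^ m)⁻¹ x)) ∂μ01
    ≤ ((2:ℝ) ^ (2 * m)) ^ p * ((2:ℝ) ^ m)⁻¹
        + ((∑ j ∈ Finset.range m, ((2:ℝ) ^ (m - 1 + j)) ^ p *
              (((2:ℝ) ^ m)⁻¹ + ((2:ℝ) ^ m)⁻¹))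
            + ((2:ℝ) ^ m) ^ p * ((2:ℝ) ^ m)⁻¹) := by
  have h2m : (0:ℝ) < ((2:ℝ) ^ m)⁻¹ := by positivity
  have hjint : ∀ j : ℕ, Integrable (fun x => ind 0 ((2:ℝ) ^ m)⁻¹ x
      + ind ((2:ℝ) ^ (j + 1))⁻¹ (((2:ℝ) ^ (j + 1))⁻¹ + ((2:ℝ) ^ m)⁻¹) x) μ01 :=
    fun j => Integrable.add (ind_integrable _ _) (ind_integrable _ _)
  have hSint : Integrable (fun x => ∑ j ∈ Finset.range m, ((2:ℝ) ^ (m - 1 + j)) ^ p *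
      (ind 0 ((2:ℝ) ^ m)⁻¹ x
        + ind ((2:ℝ) ^ (j + 1))⁻¹ (((2:ℝ) ^ (j + 1))⁻¹ + ((2:ℝ) ^ m)⁻¹) x)) μ01 :=
    integrable_finset_sum _ fun j _ => Integrable.const_mul (hjint j) _
  have eA : ∫ x, (((2:ℝ) ^ (2 * m)) ^ p * ind 0 ((2:ℝ) ^ m)⁻¹ x
      + ((∑ j ∈ Finset.range m, ((2:ℝ) ^ (m - 1 + j)) ^ p *
            (ind 0 ((2:ℝ) ^ m)⁻¹ x
              + ind ((2:ℝ) ^ (j + 1))⁻¹ (((2:ℝ) ^ (j + 1))⁻¹ + ((2:ℝ) ^ m)⁻¹) x))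
          + ((2:ℝ) ^ m) ^ p * ind 0 ((2:ℝ) ^ m)⁻¹ x)) ∂μ01
      = (∫ x, ((2:ℝ) ^ (2 * m)) ^ p * ind 0 ((2:ℝ) ^ m)⁻¹ x ∂μ01)
        + ((∫ x, (∑ j ∈ Finset.range m, ((2:ℝ) ^ (m - 1 + j)) ^ p *
            (ind 0 ((2:ℝ) ^ m)⁻¹ x
              + ind ((2:ℝ) ^ (j + 1))⁻¹ (((2:ℝ) ^ (j + 1))⁻¹ + ((2:ℝ) ^ m)⁻¹) x)) ∂μ01)
          + ∫ x, ((2:ℝ) ^ m) ^ p * ind 0 ((2:ℝ) ^ m)⁻¹ x ∂μ01) := by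
    have h1 : Integrable (fun x => ((2:ℝ) ^ (2 * m)) ^ p * ind 0 ((2:ℝ) ^ m)⁻¹ x) μ01 :=
      (ind_integrable _ _).const_mul _
    have h3 : Integrable (fun x => ((2:ℝ) ^ m) ^ p * ind 0 ((2:ℝ) ^ m)⁻¹ x) μ01 :=
      (ind_integrable _ _).const_mul _
    exact (integral_add h1 (hSint.add h3)).trans
      (congrArg (fun t => (∫ x, ((2:ℝ) ^ (2 * m)) ^ p * ind 0 ((2:ℝ) ^ m)⁻¹ x ∂μ01) + t)
        (integral_add hSint h3))
  rw [eA]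
  have hi0 : ∫ x, ind 0 ((2:ℝ) ^ m)⁻¹ x ∂μ01 ≤ ((2:ℝ) ^ m)⁻¹ := by
    have := ind_integral_le (a := 0) (b := ((2:ℝ) ^ m)⁻¹) (by positivity)
    linarith
  have e1 : ∫ x, ((2:ℝ) ^ (2 * m)) ^ p * ind 0 ((2:ℝ) ^ m)⁻¹ x ∂μ01
      = ((2:ℝ) ^ (2 * m)) ^ p * ∫ x, ind 0 ((2:ℝ) ^ m)⁻¹ x ∂μ01 :=
    integral_const_mul _ _
  have e2 : ∫ x, ((2:ℝ) ^ m) ^ p * ind 0 ((2:ℝ) ^ m)⁻¹ x ∂μ01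
      = ((2:ℝ) ^ m) ^ p * ∫ x, ind 0 ((2:ℝ) ^ m)⁻¹ x ∂μ01 :=
    integral_const_mul _ _
  have eS : ∫ x, (∑ j ∈ Finset.range m, ((2:ℝ) ^ (m - 1 + j)) ^ p *
        (ind 0 ((2:ℝ) ^ m)⁻¹ x
          + ind ((2:ℝ) ^ (j + 1))⁻¹ (((2:ℝ) ^ (j + 1))⁻¹ + ((2:ℝ) ^ m)⁻¹) x)) ∂μ01
      = ∑ j ∈ Finset.range m, ∫ x, ((2:ℝ) ^ (m - 1 + j)) ^ p *
        (ind 0 ((2:ℝ) ^ m)⁻¹ x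
          + ind ((2:ℝ) ^ (j + 1))⁻¹ (((2:ℝ) ^ (j + 1))⁻¹ + ((2:ℝ) ^ m)⁻¹) x) ∂μ01 :=
    integral_finset_sum _ fun j _ => Integrable.const_mul (hjint j) _
  rw [e1, e2, eS]
  refine add_le_add
    (mul_le_mul_of_nonneg_left hi0 (Real.rpow_nonneg (by positivity) p))
    (add_le_add (Finset.sum_le_sum fun j _ => ?_)
      (mul_le_mul_of_nonneg_left hi0 (Real.rpow_nonneg (by positivity) p)))
  have e3 : ∫ x, ((2:ℝ) ^ (m - 1 + j)) ^ p *
        (ind 0 ((2:ℝ) ^ m)⁻¹ x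
          + ind ((2:ℝ) ^ (j + 1))⁻¹ (((2:ℝ) ^ (j + 1))⁻¹ + ((2:ℝ) ^ m)⁻¹) x) ∂μ01
      = ((2:ℝ) ^ (m - 1 + j)) ^ p * ∫ x, (ind 0 ((2:ℝ) ^ m)⁻¹ x
          + ind ((2:ℝ) ^ (j + 1))⁻¹ (((2:ℝ) ^ (j + 1))⁻¹ + ((2:ℝ) ^ m)⁻¹) x) ∂μ01 :=
    integral_const_mul _ _
  have e4 : ∫ x, (ind 0 ((2:ℝ) ^ m)⁻¹ x
        + ind ((2:ℝ) ^ (j + 1))⁻¹ (((2:ℝ) ^ (j + 1))⁻¹ + ((2:ℝ) ^ m)⁻¹) x) ∂μ01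
      = (∫ x, ind 0 ((2:ℝ) ^ m)⁻¹ x ∂μ01)
        + ∫ x, ind ((2:ℝ) ^ (j + 1))⁻¹ (((2:ℝ) ^ (j + 1))⁻¹ + ((2:ℝ) ^ m)⁻¹) x ∂μ01 :=
    integral_add (ind_integrable _ _) (ind_integrable _ _)
  rw [e3, e4]
  have hi1 : ∫ x, ind ((2:ℝ) ^ (j + 1))⁻¹ (((2:ℝ) ^ (j + 1))⁻¹ + ((2:ℝ) ^ m)⁻¹) x ∂μ01
      ≤ ((2:ℝ) ^ m)⁻¹ := by
    have := ind_integral_le (a := ((2:ℝ) ^ (j + 1))⁻¹)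
      (b := ((2:ℝ) ^ (j + 1))⁻¹ + ((2:ℝ) ^ m)⁻¹) (by linarith)
    linarith
  exact mul_le_mul_of_nonneg_left (add_le_add hi0 hi1) (Real.rpow_nonneg (by positivity) p)

lemma U_integral_le (hp : 0 ≤ p) : ∫ x, U p N x ∂μ01
    ≤ 1 + ∑ m ∈ Finset.range N,
      (((2:ℝ) ^ (2 * m)) ^ p * ((2:ℝ) ^ m)⁻¹
        + ((∑ j ∈ Finset.range m, ((2:ℝ) ^ (m - 1 + j)) ^ p *
              (((2:ℝ) ^ m)⁻¹ + ((2:ℝ) ^ m)⁻¹))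
            + ((2:ℝ) ^ m) ^ p * ((2:ℝ) ^ m)⁻¹)) := by
  have eA : ∫ x, U p N x ∂μ01
      = (∫ _x, (1:ℝ) ∂μ01) + ∫ x, (∑ m ∈ Finset.range N,
        (((2:ℝ) ^ (2 * m)) ^ p * ind 0 ((2:ℝ) ^ m)⁻¹ x
          + ((∑ j ∈ Finset.range m, ((2:ℝ) ^ (m - 1 + j)) ^ p *
                (ind 0 ((2:ℝ) ^ m)⁻¹ x
                  + ind ((2:ℝ) ^ (j + 1))⁻¹ (((2:ℝ) ^ (j + 1))⁻¹ + ((2:ℝ) ^ m)⁻¹) x))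
              + ((2:ℝ) ^ m) ^ p * ind 0 ((2:ℝ) ^ m)⁻¹ x))) ∂μ01 := by
    unfold U
    exact integral_add (integrable_const 1)
      (integrable_finset_sum _ fun m _ => mterm_integrable p m)
  have e1 : ∫ _x, (1:ℝ) ∂μ01 = 1 := by
    rw [integral_const, measureReal_def, Measure.restrict_apply_univ, Real.volume_Ico, smul_eq_mul, mul_one]
    norm_num
  have eS : ∫ x, (∑ m ∈ Finset.range N,
        (((2:ℝ) ^ (2 * m)) ^ p * ind 0 ((2:ℝ) ^ m)⁻¹ x
          + ((∑ j ∈ Finset.range m, ((2:ℝ) ^ (m - 1 + j)) ^ p *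
                (ind 0 ((2:ℝ) ^ m)⁻¹ x
                  + ind ((2:ℝ) ^ (j + 1))⁻¹ (((2:ℝ) ^ (j + 1))⁻¹ + ((2:ℝ) ^ m)⁻¹) x))
              + ((2:ℝ) ^ m) ^ p * ind 0 ((2:ℝ) ^ m)⁻¹ x))) ∂μ01
      = ∑ m ∈ Finset.range N, ∫ x,
        (((2:ℝ) ^ (2 * m)) ^ p * ind 0 ((2:ℝ) ^ m)⁻¹ x
          + ((∑ j ∈ Finset.range m, ((2:ℝ) ^ (m - 1 + j)) ^ p *
                (ind 0 ((2:ℝ) ^ m)⁻¹ x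
                  + ind ((2:ℝ) ^ (j + 1))⁻¹ (((2:ℝ) ^ (j + 1))⁻¹ + ((2:ℝ) ^ m)⁻¹) x))
              + ((2:ℝ) ^ m) ^ p * ind 0 ((2:ℝ) ^ m)⁻¹ x)) ∂μ01 :=
    integral_finset_sum _ fun m _ => mterm_integrable p m
  rw [eA, e1, eS]
  exact add_le_add le_rfl (Finset.sum_le_sum fun m _ => mterm_integral_le p hp m)

end
lemma SB_le {p : ℝ} (hp1 : 1/2 < p) (hp2 : p ≤ 1) (N : ℕ) :
    1 + ∑ m ∈ Finset.range N,
      (((2:ℝ) ^ (2 * m)) ^ p * ((2:ℝ) ^ m)⁻¹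
        + ((∑ j ∈ Finset.range m, ((2:ℝ) ^ (m - 1 + j)) ^ p *
              (((2:ℝ) ^ m)⁻¹ + ((2:ℝ) ^ m)⁻¹))
            + ((2:ℝ) ^ m) ^ p * ((2:ℝ) ^ m)⁻¹))
    ≤ (1 + (2 + 2 / ((2:ℝ) ^ p - 1)) / ((2:ℝ) ^ (2 * p - 1) - 1))
        * (2:ℝ) ^ ((N:ℝ) * (2 * p - 1)) := by
  have hp0 : 0 < p := by linarith
  set r : ℝ := (2:ℝ) ^ (2 * p - 1) with hr
  set q : ℝ := (2:ℝ) ^ p with hq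
  have hr1 : 1 < r := by
    rw [hr]
    exact Real.one_lt_rpow_iff_of_pos (by norm_num) |>.mpr (Or.inl ⟨by norm_num, by linarith⟩)
  have hq1 : 1 < q := by
    rw [hq]
    exact Real.one_lt_rpow_iff_of_pos (by norm_num) |>.mpr (Or.inl ⟨by norm_num, hp0⟩)
  have hpow : ∀ k : ℕ, ((2:ℝ) ^ k : ℝ) ^ p = (2:ℝ) ^ ((k:ℝ) * p) := by
    intro k
    rw [← Real.rpow_natCast 2 k, ← Real.rpow_mul (by norm_num)]
  have hinv : ∀ k : ℕ, ((2:ℝ) ^ k)⁻¹ = (2:ℝ) ^ (-(k:ℝ)) := by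
    intro k
    rw [← Real.rpow_natCast 2 k, ← Real.rpow_neg (by norm_num)]
  have hmul : ∀ a b : ℝ, (2:ℝ) ^ a * (2:ℝ) ^ b = (2:ℝ) ^ (a + b) :=
    fun a b => (Real.rpow_add (by norm_num) a b).symm
  have hle2 : ∀ a b : ℝ, a ≤ b → (2:ℝ) ^ a ≤ (2:ℝ) ^ b :=
    fun a b h => Real.rpow_le_rpow_of_exponent_le (by norm_num) h
  have hrm : ∀ m : ℕ, r ^ m = (2:ℝ) ^ ((2 * p - 1) * (m:ℝ)) := by
    intro m
    rw [hr, ← Real.rpow_natCast ((2:ℝ) ^ (2 * p - 1)) m, ← Real.rpow_mul (by norm_num)]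
  have hqm : ∀ m : ℕ, q ^ m = (2:ℝ) ^ (p * (m:ℝ)) := by
    intro m
    rw [hq, ← Real.rpow_natCast ((2:ℝ) ^ p) m, ← Real.rpow_mul (by norm_num)]
  have hrpos : ∀ m : ℕ, (0:ℝ) < r ^ m := fun m => pow_pos (by linarith) m
  -- per-term bound
  have hterm : ∀ m : ℕ,
      ((2:ℝ) ^ (2 * m)) ^ p * ((2:ℝ) ^ m)⁻¹
        + ((∑ j ∈ Finset.range m, ((2:ℝ) ^ (m - 1 + j)) ^ p *
              (((2:ℝ) ^ m)⁻¹ + ((2:ℝ) ^ m)⁻¹))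
            + ((2:ℝ) ^ m) ^ p * ((2:ℝ) ^ m)⁻¹)
      ≤ (2 + 2 / (q - 1)) * r ^ m := by
    intro m
    have hA : ((2:ℝ) ^ (2 * m)) ^ p * ((2:ℝ) ^ m)⁻¹ = r ^ m := by
      rw [hpow, hinv, hmul, hrm]
      congr 1
      push_cast
      ring
    have hC : ((2:ℝ) ^ m) ^ p * ((2:ℝ) ^ m)⁻¹ ≤ r ^ m := by
      rw [hpow, hinv, hmul, hrm]
      refine hle2 _ _ ?_
      have : (0:ℝ) ≤ (m:ℝ) * p := by positivity
      nlinarith [this]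
    have hB : (∑ j ∈ Finset.range m, ((2:ℝ) ^ (m - 1 + j)) ^ p *
          (((2:ℝ) ^ m)⁻¹ + ((2:ℝ) ^ m)⁻¹))
        ≤ (2 / (q - 1)) * r ^ m := by
      have hj : ∀ j ∈ Finset.range m, ((2:ℝ) ^ (m - 1 + j)) ^ p *
            (((2:ℝ) ^ m)⁻¹ + ((2:ℝ) ^ m)⁻¹)
          ≤ 2 * (2:ℝ) ^ ((m:ℝ) * p - (m:ℝ)) * q ^ j := by
        intro j _
        have h1 : ((2:ℝ) ^ (m - 1 + j)) ^ p ≤ ((2:ℝ) ^ (m + j)) ^ p := by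
          rw [hpow, hpow]
          refine hle2 _ _ ?_
          have hc : ((m - 1 + j : ℕ) : ℝ) ≤ ((m + j : ℕ) : ℝ) := by
            exact_mod_cast (by omega : m - 1 + j ≤ m + j)
          exact mul_le_mul_of_nonneg_right hc hp0.le
        have h2 : ((2:ℝ) ^ (m + j)) ^ p * (((2:ℝ) ^ m)⁻¹ + ((2:ℝ) ^ m)⁻¹)
            = 2 * (2:ℝ) ^ ((m:ℝ) * p - (m:ℝ)) * q ^ j := by
          rw [hpow, hinv, hqm]
          rw [show (((m + j : ℕ)):ℝ) = (m:ℝ) + (j:ℝ) by push_cast; ring]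
          rw [show (2:ℝ) ^ (((m:ℝ) + (j:ℝ)) * p) * ((2:ℝ) ^ (-(m:ℝ)) + (2:ℝ) ^ (-(m:ℝ)))
              = 2 * ((2:ℝ) ^ (((m:ℝ) + (j:ℝ)) * p) * (2:ℝ) ^ (-(m:ℝ))) by ring, hmul]
          rw [mul_assoc, hmul]
          congr 1
          ring
        calc ((2:ℝ) ^ (m - 1 + j)) ^ p * (((2:ℝ) ^ m)⁻¹ + ((2:ℝ) ^ m)⁻¹)
            ≤ ((2:ℝ) ^ (m + j)) ^ p * (((2:ℝ) ^ m)⁻¹ + ((2:ℝ) ^ m)⁻¹) := by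
              refine mul_le_mul_of_nonneg_right h1 ?_
              positivity
          _ = 2 * (2:ℝ) ^ ((m:ℝ) * p - (m:ℝ)) * q ^ j := h2
      refine le_trans (Finset.sum_le_sum hj) ?_
      rw [← Finset.mul_sum]
      have hq0 : (0:ℝ) < q - 1 := by linarith
      have hgeom : ∑ j ∈ Finset.range m, q ^ j ≤ q ^ m / (q - 1) := by
        rw [geom_sum_eq (ne_of_gt hq1)]
        exact (div_le_div_iff_of_pos_right hq0).mpr (by linarith)
      have hXq : (2:ℝ) ^ ((m:ℝ) * p - (m:ℝ)) * q ^ m = r ^ m := by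
        rw [hqm, hmul, hrm]
        congr 1
        ring
      calc 2 * (2:ℝ) ^ ((m:ℝ) * p - (m:ℝ)) * ∑ j ∈ Finset.range m, q ^ j
          ≤ 2 * (2:ℝ) ^ ((m:ℝ) * p - (m:ℝ)) * (q ^ m / (q - 1)) := by
            refine mul_le_mul_of_nonneg_left hgeom ?_
            positivity
        _ = (2 / (q - 1)) * ((2:ℝ) ^ ((m:ℝ) * p - (m:ℝ)) * q ^ m) := by
            field_simp
        _ = (2 / (q - 1)) * r ^ m := by rw [hXq]
    have hApos : (0:ℝ) < r ^ m := hrpos m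
    linarith [hA, hB, hC]
  -- sum the geometric series
  have hq0 : (0:ℝ) < q - 1 := by linarith
  have hr0 : (0:ℝ) < r - 1 := by linarith
  have hcoef : (0:ℝ) ≤ 2 + 2 / (q - 1) := by positivity
  have hsum : ∑ m ∈ Finset.range N,
      (((2:ℝ) ^ (2 * m)) ^ p * ((2:ℝ) ^ m)⁻¹
        + ((∑ j ∈ Finset.range m, ((2:ℝ) ^ (m - 1 + j)) ^ p *
              (((2:ℝ) ^ m)⁻¹ + ((2:ℝ) ^ m)⁻¹))
            + ((2:ℝ) ^ m) ^ p * ((2:ℝ) ^ m)⁻¹))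
      ≤ (2 + 2 / (q - 1)) * (r ^ N / (r - 1)) := by
    refine le_trans (Finset.sum_le_sum fun m _ => hterm m) ?_
    rw [← Finset.mul_sum]
    refine mul_le_mul_of_nonneg_left ?_ hcoef
    rw [geom_sum_eq (ne_of_gt hr1)]
    exact (div_le_div_iff_of_pos_right hr0).mpr (by linarith [hrpos N])
  have h1N : (1:ℝ) ≤ r ^ N := one_le_pow₀ hr1.le
  have hfinal : 1 + (2 + 2 / (q - 1)) * (r ^ N / (r - 1))
      ≤ (1 + (2 + 2 / (q - 1)) / (r - 1)) * r ^ N := by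
    have heq : (1 + (2 + 2 / (q - 1)) / (r - 1)) * r ^ N
        = r ^ N + (2 + 2 / (q - 1)) * (r ^ N / (r - 1)) := by
      field_simp
    rw [heq]
    linarith
  have hrN : r ^ N = (2:ℝ) ^ ((N:ℝ) * (2 * p - 1)) := by
    rw [hrm N]
    congr 1
    ring
  rw [← hrN]
  linarith


end WalshAux

/-- the maximal Fejér kernel estimate
`∫₀¹ sup_{1 ≤ n ≤ 2^N} (n |K_n|)^p ≤ c_p 2^{N(2p-1)}` for `1/2 < p ≤ 1`. -/
theorem maximal_fejer_kernel_estimate (p : ℝ) (hp1 : 1/2 < p) (hp2 : p ≤ 1) :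
    ∃ c : ℝ, ∀ N : ℕ,
      (∫ x in Set.Ico (0:ℝ) 1,
          (⨆ n ∈ Set.Icc (1:ℕ) (2 ^ N), ((n : ℝ) * |Walsh.K n x|)) ^ p)
        ≤ c * (2:ℝ) ^ ((N:ℝ) * (2 * p - 1)) := by
  have hp0 : (0:ℝ) < p := by linarith
  refine ⟨1 + (2 + 2 / ((2:ℝ) ^ p - 1)) / ((2:ℝ) ^ (2 * p - 1) - 1), fun N => ?_⟩
  have hnn : 0 ≤ᵐ[volume.restrict (Set.Ico (0:ℝ) 1)]
      fun x => (⨆ n ∈ Set.Icc (1:ℕ) (2 ^ N), ((n : ℝ) * |Walsh.K n x|)) ^ p :=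
    Filter.Eventually.of_forall fun x => Real.rpow_nonneg (WalshAux.sup_nonneg' N x) p
  have hle : (fun x => (⨆ n ∈ Set.Icc (1:ℕ) (2 ^ N), ((n : ℝ) * |Walsh.K n x|)) ^ p)
      ≤ᵐ[volume.restrict (Set.Ico (0:ℝ) 1)] WalshAux.U p N := by
    refine (ae_restrict_mem measurableSet_Ico).mono fun x hx => ?_
    have h1 := WalshAux.sup_le_V hx N
    have h2 := Real.rpow_le_rpow (WalshAux.sup_nonneg' N x) h1 hp0.le
    exact le_trans h2 (WalshAux.V_rpow_le_U hp0 hp2 N x)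
  calc ∫ x in Set.Ico (0:ℝ) 1,
        (⨆ n ∈ Set.Icc (1:ℕ) (2 ^ N), ((n : ℝ) * |Walsh.K n x|)) ^ p
      ≤ ∫ x in Set.Ico (0:ℝ) 1, WalshAux.U p N x :=
        integral_mono_of_nonneg hnn (WalshAux.U_integrable p N) hle
    _ ≤ 1 + ∑ m ∈ Finset.range N,
        (((2:ℝ) ^ (2 * m)) ^ p * ((2:ℝ) ^ m)⁻¹
          + ((∑ j ∈ Finset.range m, ((2:ℝ) ^ (m - 1 + j)) ^ p *
                (((2:ℝ) ^ m)⁻¹ + ((2:ℝ) ^ m)⁻¹))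
              + ((2:ℝ) ^ m) ^ p * ((2:ℝ) ^ m)⁻¹)) := WalshAux.U_integral_le p N hp0.le
    _ ≤ (1 + (2 + 2 / ((2:ℝ) ^ p - 1)) / ((2:ℝ) ^ (2 * p - 1) - 1))
        * (2:ℝ) ^ ((N:ℝ) * (2 * p - 1)) := WalshAux.SB_le hp1 hp2 N
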